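/- For a scalar cubic form P : ℝ^N → ℝ with N ≥ 2 and associated symmetric trilinear form T, the following are equivalent: (i) P has a regular zero (a point v with P(v)=0 and the linear functional x ↦ T(v,v,x) nonzero); (ii) P is not a perfect cube, i.e., P is not of the form P(x) = (ℓ(x))^3 for some linear functional ℓ; (iii) the linear map L : ℝ^N → Sym(N,ℝ), L(x) = 6·T(x,·,·), has rank strictly greater than one. -/
import Mathlib

/-- Every depressed real cubic has a real root. -/
private lemma cubic_root_aux (p q : ℝ) : ∃ s : ℝ, s ^ 3 + p * s + q = 0 := by
  set M : ℝ := 1 + |p| + |q| with hMdef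
  have hp0 : (0:ℝ) ≤ |p| := abs_nonneg p
  have hq0 : (0:ℝ) ≤ |q| := abs_nonneg q
  have hM1 : 1 ≤ M := by simp only [hMdef]; linarith
  have hcont : ContinuousOn (fun s : ℝ => s ^ 3 + p * s + q) (Set.Icc (-M) M) := by
    fun_prop
  have hneg : (-M) ^ 3 + p * (-M) + q ≤ 0 := by
    nlinarith [le_abs_self p, neg_abs_le p, le_abs_self q, neg_abs_le q,
      mul_le_mul_of_nonneg_right (neg_abs_le p) (le_of_lt (by linarith : (0:ℝ) < M)),
      sq_nonneg (M - 1), sq_nonneg M]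
  have hpos : 0 ≤ M ^ 3 + p * M + q := by
    nlinarith [le_abs_self p, neg_abs_le p, le_abs_self q, neg_abs_le q,
      sq_nonneg (M - 1), sq_nonneg M]
  have hsub := intermediate_value_Icc (by linarith : (-M : ℝ) ≤ M) hcont
  have h0 : (0:ℝ) ∈ Set.Icc ((fun s : ℝ => s ^ 3 + p * s + q) (-M))
      ((fun s : ℝ => s ^ 3 + p * s + q) M) := by
    simp only
    exact ⟨hneg, hpos⟩
  obtain ⟨s, _, hs⟩ := hsub h0
  exact ⟨s, hs⟩

/-- for a scalar cubic form `P(x) = T(x,x,x)` on `ℝ^N`, `N ≥ 2`: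
(i) `P` has a regular zero ↔ (ii) `P` is not a perfect cube ↔ (iii) the linear
map `L(x) = 6T(x,·,·)` into symmetric bilinear forms has rank `> 1`. -/
theorem scalar_cubic_regular_zero_tfae (N : ℕ) (hN : 2 ≤ N)
    (P : (Fin N → ℝ) → ℝ)
    (T : (Fin N → ℝ) →ₗ[ℝ] (Fin N → ℝ) →ₗ[ℝ] (Fin N → ℝ) →ₗ[ℝ] ℝ)
    (hsym : ∀ x y z, T x y z = T y x z ∧ T x y z = T x z y)
    (hP : ∀ x, P x = T x x x) :
    ((∃ v, P v = 0 ∧ ∃ x, T v v x ≠ 0) ↔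
      ¬ ∃ l : (Fin N → ℝ) →ₗ[ℝ] ℝ, ∀ x, P x = (l x) ^ 3) ∧
    ((¬ ∃ l : (Fin N → ℝ) →ₗ[ℝ] ℝ, ∀ x, P x = (l x) ^ 3) ↔
      ¬ ∃ B : (Fin N → ℝ) → (Fin N → ℝ) → ℝ, ∀ x, ∃ c : ℝ,
        ∀ y z, 6 * T x y z = c * B y z) := by
  have hs1 : ∀ x y z, T x y z = T y x z := fun x y z => (hsym x y z).1
  have hs2 : ∀ x y z, T x y z = T x z y := fun x y z => (hsym x y z).2
  have hs3 : ∀ x y z, T x y z = T z y x := by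
    intro x y z
    rw [hs2, hs1, hs2]
  -- expansion lemmas
  have expand3 : ∀ (v w : Fin N → ℝ) (t : ℝ),
      T (v + t • w) (v + t • w) (v + t • w) =
        T v v v + 3 * t * T v v w + 3 * t ^ 2 * T v w w + t ^ 3 * T w w w := by
    intro v w t
    have h1 : T v w v = T v v w := hs2 v w v
    have h2 : T w v v = T v v w := (hs1 w v v).trans (hs2 v w v)
    have h3 : T w v w = T v w w := hs1 w v w
    have h4 : T w w v = T v w w := (hs2 w w v).trans (hs1 w v w)
    simp only [map_add, map_smul, LinearMap.add_apply, LinearMap.smul_apply,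
      smul_eq_mul]
    rw [h1, h2, h3, h4]
    ring
  have expand2 : ∀ (v w : Fin N → ℝ) (t : ℝ),
      T (v + t • w) (v + t • w) w =
        T v v w + 2 * t * T v w w + t ^ 2 * T w w w := by
    intro v w t
    have h3 : T w v w = T v w w := hs1 w v w
    simp only [map_add, map_smul, LinearMap.add_apply, LinearMap.smul_apply,
      smul_eq_mul]
    rw [h3]
    ring
  -- polarization: from T x x x = (l x)^3 deduce the mixed values
  have pol1 : ∀ (l : (Fin N → ℝ) →ₗ[ℝ] ℝ), (∀ x, T x x x = (l x) ^ 3) →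
      ∀ x y, T x x y = (l x) ^ 2 * l y ∧ T x y y = l x * (l y) ^ 2 := by
    intro l hc x y
    have hl1 : l (x + (1:ℝ) • y) = l x + l y := by simp
    have hl2 : l (x + (-1:ℝ) • y) = l x - l y := by
      simp [sub_eq_add_neg]
    have E1 : T x x x + 3 * 1 * T x x y + 3 * 1 ^ 2 * T x y y + 1 ^ 3 * T y y y
        = (l x + l y) ^ 3 := by
      rw [← expand3 x y 1, hc (x + (1:ℝ) • y), hl1]
    have E2 : T x x x + 3 * (-1) * T x x y + 3 * (-1) ^ 2 * T x y y
        + (-1) ^ 3 * T y y y = (l x - l y) ^ 3 := by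
      rw [← expand3 x y (-1), hc (x + (-1:ℝ) • y), hl2]
    constructor
    · linear_combination (1/6) * E1 - (1/6) * E2 - (1/3) * hc y
    · linear_combination (1/6) * E1 + (1/6) * E2 - (1/3) * hc x
  have pol2 : ∀ (l : (Fin N → ℝ) →ₗ[ℝ] ℝ), (∀ x, T x x x = (l x) ^ 3) →
      ∀ x y z, T x y z = l x * l y * l z := by
    intro l hc x y z
    have h1 : T x (y + z) (y + z) = l x * (l (y + z)) ^ 2 := (pol1 l hc x (y + z)).2
    have hl : l (y + z) = l y + l z := map_add l y z
    have hexp : T x (y + z) (y + z) = T x y y + 2 * T x y z + T x z z := by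
      have hzy : T x z y = T x y z := hs2 x z y
      simp only [map_add, LinearMap.add_apply]
      linear_combination hzy
    rw [hl, hexp] at h1
    have hy := (pol1 l hc x y).2
    have hz := (pol1 l hc x z).2
    linear_combination (1/2) * h1 - (1/2) * hy - (1/2) * hz
  -- the hard direction: if every zero of P is singular, P is a cube
  have hard : (∀ v, P v = 0 → ∀ x, T v v x = 0) →
      ∃ l : (Fin N → ℝ) →ₗ[ℝ] ℝ, ∀ x, P x = (l x) ^ 3 := by
    intro hsing
    by_cases h0 : ∀ x, P x = 0
    · exact ⟨0, fun x => by simp [h0 x]⟩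
    · push_neg at h0
      obtain ⟨e0, he0⟩ := h0
      have hpos : ∃ e1, 0 < P e1 := by
        rcases lt_trichotomy (P e0) 0 with h | h | h
        · refine ⟨-e0, ?_⟩
          have hneg : P (-e0) = -P e0 := by
            rw [hP, hP]
            simp [map_neg]
          rw [hneg]; linarith
        · exact absurd h he0
        · exact ⟨e0, h⟩
      obtain ⟨e1, he1⟩ := hpos
      obtain ⟨d, hd⟩ := cubic_root_aux 0 (-(P e1)⁻¹)
      have hd3 : d ^ 3 * P e1 = 1 := by
        have hdd : d ^ 3 = (P e1)⁻¹ := by linear_combination hd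
        rw [hdd]
        exact inv_mul_cancel₀ he1.ne'
      have hePe : ∃ e, T e e e = 1 := by
        refine ⟨d • e1, ?_⟩
        simp only [map_smul, LinearMap.smul_apply, smul_eq_mul]
        rw [← hP e1]
        linear_combination hd3
      obtain ⟨e, hPe⟩ := hePe
      refine ⟨T e e, fun x => ?_⟩
      have key : ∀ s : ℝ,
          s ^ 3 + (3 * (T x x e - (T x e e) ^ 2)) * s
            + (P x - 3 * (T x e e) * (T x x e) + 2 * (T x e e) ^ 3) = 0 →
          s ^ 2 + (T x x e - (T x e e) ^ 2) = 0 := by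
        intro s hs
        have hPv : P (x + (s - T x e e) • e) = 0 := by
          rw [hP, expand3 x e (s - T x e e)]
          linear_combination hs + (s - T x e e) ^ 3 * hPe - hP x
        have h2 := hsing _ hPv e
        rw [expand2 x e (s - T x e e)] at h2
        linear_combination h2 - (s - T x e e) ^ 2 * hPe
      obtain ⟨s0, hs0⟩ := cubic_root_aux (3 * (T x x e - (T x e e) ^ 2))
        (P x - 3 * (T x e e) * (T x x e) + 2 * (T x e e) ^ 3)
      have h1 := key s0 hs0
      have h2' : (-2 * s0) ^ 3 + (3 * (T x x e - (T x e e) ^ 2)) * (-2 * s0)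
          + (P x - 3 * (T x e e) * (T x x e) + 2 * (T x e e) ^ 3) = 0 := by
        linear_combination hs0 - 9 * s0 * h1
      have h3 := key _ h2'
      have hsq : s0 ^ 2 = 0 := by linear_combination (1/3) * h3 - (1/3) * h1
      have hs00 : s0 = 0 := by
        exact (pow_eq_zero_iff two_ne_zero).mp hsq
      subst hs00
      have hxe : T x e e = T e e x := hs3 x e e
      linear_combination hs0 + 3 * (T x e e) * h1
        + ((T x e e) ^ 2 + (T x e e) * (T e e x) + (T e e x) ^ 2) * hxe
  constructor
  · constructor
    · rintro ⟨v, hv, x, hx⟩ ⟨l, hl⟩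
      have hc : ∀ y, T y y y = (l y) ^ 3 := fun y => (hP y).symm.trans (hl y)
      have hlv : l v = 0 := by
        have h3 : (l v) ^ 3 = 0 := by rw [← hl v]; exact hv
        exact (pow_eq_zero_iff three_ne_zero).mp h3
      have hvv := (pol1 l hc v x).1
      apply hx
      rw [hvv, hlv]
      ring
    · intro hnc
      by_contra hreg
      push_neg at hreg
      exact hnc (hard hreg)
  · apply not_congr
    constructor
    · rintro ⟨l, hl⟩
      have hc : ∀ y, T y y y = (l y) ^ 3 := fun y => (hP y).symm.trans (hl y)
      refine ⟨fun y z => l y * l z, fun x => ⟨6 * l x, fun y z => ?_⟩⟩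
      rw [pol2 l hc x y z]
      ring
    · rintro ⟨B, hB⟩
      choose c hc using hB
      by_cases hT : ∀ x y z, T x y z = 0
      · exact ⟨0, fun x => by rw [hP x, hT x x x]; simp⟩
      · push_neg at hT
        obtain ⟨x0, y0, z0, hT0⟩ := hT
        have h6 : (6:ℝ) * T x0 y0 z0 ≠ 0 := mul_ne_zero (by norm_num) hT0
        have hcB := hc x0 y0 z0
        have hB0 : B y0 z0 ≠ 0 := fun h => h6 (by rw [hcB, h, mul_zero])
        have hc0 : c x0 ≠ 0 := fun h => h6 (by rw [hcB, h, zero_mul])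
        obtain ⟨d, hd⟩ := cubic_root_aux 0
          (-(36 * B x0 x0 / ((B y0 z0) ^ 3 * (c x0) ^ 2)))
        have hd3 : d ^ 3 * ((B y0 z0) ^ 3 * (c x0) ^ 2) = 36 * B x0 x0 := by
          have hdd : d ^ 3 = 36 * B x0 x0 / ((B y0 z0) ^ 3 * (c x0) ^ 2) := by
            linear_combination hd
          rw [hdd]
          field_simp
        refine ⟨d • ((T.flip y0).flip z0), fun x => ?_⟩
        have hlx : (d • ((T.flip y0).flip z0)) x = d * T x y0 z0 := by
          simp [LinearMap.flip_apply]
        rw [hlx]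
        have a1 := hc x x x
        have a2 := hc x0 x x
        have a3 := hc x x0 x
        have a4 := hc x0 x0 x
        have a5 := hc x x0 x0
        have s1 : T x0 x x = T x x0 x := hs1 x0 x x
        have s2 : T x0 x0 x = T x x0 x0 := (hs2 x0 x0 x).trans (hs1 x0 x x0)
        have E2 := hc x y0 z0
        have E1 : 6 * (c x0) ^ 2 * T x x x = (c x) ^ 3 * B x0 x0 := by
          linear_combination (c x0) ^ 2 * a1 - (c x0 * c x) * a2
            + (6 * c x0 * c x) * s1 + (c x0 * c x) * a3 - (c x) ^ 2 * a4
            + 6 * (c x) ^ 2 * s2 + (c x) ^ 2 * a5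
        have hne : (6 * (c x0) ^ 2 * (B y0 z0) ^ 3 : ℝ) ≠ 0 :=
          mul_ne_zero (mul_ne_zero (by norm_num) (pow_ne_zero _ hc0))
            (pow_ne_zero _ hB0)
        have keyx : (6 * (c x0) ^ 2 * (B y0 z0) ^ 3) * T x x x
            = (6 * (c x0) ^ 2 * (B y0 z0) ^ 3) * ((d * T x y0 z0) ^ 3) := by
          linear_combination (B y0 z0) ^ 3 * E1 - 6 * (T x y0 z0) ^ 3 * hd3
            - B x0 x0 * ((c x * B y0 z0) ^ 2 + 6 * T x y0 z0 * c x * B y0 z0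
              + 36 * (T x y0 z0) ^ 2) * E2
        have hTx := mul_left_cancel₀ hne keyx
        rw [hP x, hTx]
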